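/- Grazing set decay estimate: Let D ⊆ ℝ³ satisfy the grazing-measure bound |J_α ∩ {|w| = 1}| ≲ α (surface measure), where J_α = { w : j(w) < α|w| } and j is the gauge of D at x₀. Let μ : ℝ³×ℝ³ → ℝ satisfy |μ(x,v)| ≤ M ⟨x − tv⟩⁻²⟨v⟩⁻² for some t ≥ 1. Then ∫∫_{{x ∈ D, 0 < j(v) < κ}} μ²(x,v) dx dv ≤ C M² κ for all κ > 0. -/

import Mathlib

noncomputable section

open MeasureTheory

abbrev E3 := EuclideanSpace ℝ (Fin 3)

/-- Japanese bracket `⟨y⟩ = (1 + |y|²)^{1/2}`. -/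
def jap (y : E3) : ℝ := Real.sqrt (1 + ‖y‖ ^ 2)

open Set Metric
open scoped ENNReal Pointwise

set_option linter.unusedSectionVars false
set_option linter.unusedVariables false
set_option maxHeartbeats 1000000

lemma finrank_E3 : Module.finrank ℝ E3 = 3 := by simp

lemma cone_vol_le {A : Set E3} (hA : A ⊆ sphere (0:E3) 1) {d : ℝ} (hd0 : 0 < d) (hd1 : d ≤ 1)
    (hdiam : EMetric.diam A ≤ ENNReal.ofReal d) :
    volume (Ioo (0:ℝ) 1 • A) ≤ ENNReal.ofReal (24 * d ^ 2) * volume (ball (0:E3) 1) := by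
  rcases A.eq_empty_or_nonempty with rfl | ⟨w₀, hw₀⟩
  · simp
  set N := ⌈1/d⌉₊ with hN
  have cover : Ioo (0:ℝ) 1 • A ⊆
      ⋃ k ∈ Finset.range (N+1), closedBall (((k:ℝ)*d) • w₀) (2*d) := by
    rintro x ⟨r, hr, w, hw, rfl⟩
    have hw1 : ‖w‖ = 1 := mem_sphere_zero_iff_norm.1 (hA hw)
    have hw01 : ‖w₀‖ = 1 := mem_sphere_zero_iff_norm.1 (hA hw₀)
    obtain ⟨hr0, hr1⟩ := hr
    set k := ⌊r/d⌋₊ with hk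
    have hkmem : k ∈ Finset.range (N+1) := by
      simp only [Finset.mem_range, Nat.lt_succ_iff]
      exact (Nat.floor_le_floor (by gcongr)).trans (Nat.floor_le_ceil _)
    refine Set.mem_biUnion hkmem ?_
    have hdw : dist w w₀ ≤ d := by
      have := (EMetric.edist_le_diam_of_mem hw hw₀).trans hdiam
      rwa [edist_le_ofReal hd0.le] at this
    have hkd1 : (k:ℝ)*d ≤ r := by
      rw [hk, mul_comm]
      calc d * ⌊r/d⌋₊ ≤ d * (r/d) := by
            gcongr; exact Nat.floor_le (by positivity)
        _ = r := by field_simp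
    have hkd2 : r - (k:ℝ)*d ≤ d := by
      have : r/d < (k:ℝ) + 1 := Nat.lt_floor_add_one _
      have := (div_lt_iff₀ hd0).1 this
      nlinarith
    rw [mem_closedBall]
    calc dist (r • w) (((k:ℝ)*d) • w₀)
        ≤ dist (r • w) (r • w₀) + dist (r • w₀) (((k:ℝ)*d) • w₀) := dist_triangle _ _ _
      _ = r * dist w w₀ + |r - (k:ℝ)*d| * ‖w₀‖ := by
          have h2 : dist (r • w₀) (((k:ℝ)*d) • w₀) = |r - (k:ℝ)*d| * ‖w₀‖ := by
            rw [dist_eq_norm, ← sub_smul, norm_smul, Real.norm_eq_abs]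
          rw [h2, dist_smul₀, Real.norm_eq_abs, abs_of_pos hr0]
      _ ≤ 1 * d + d * 1 := by
          have habs : |r - (k:ℝ)*d| ≤ d := abs_le.2 ⟨by linarith, by linarith⟩
          apply add_le_add
          · exact mul_le_mul hr1.le hdw dist_nonneg zero_le_one
          · rw [hw01, mul_one, mul_one]; exact habs
      _ = 2*d := by ring
  have h1d : (1:ℝ) ≤ 1/d := by rw [le_div_iff₀ hd0]; linarith
  have h1 : ((N:ℝ)+1) ≤ 3/d := by
    have h3 : (3:ℝ)/d = 3*(1/d) := by ring
    have : (N:ℝ) < 1/d + 1 := Nat.ceil_lt_add_one (by positivity)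
    rw [h3]; linarith
  have h1' : ((N:ℝ)+1)*d ≤ 3 := by
    have := mul_le_mul_of_nonneg_right h1 hd0.le
    rwa [div_mul_cancel₀ _ hd0.ne'] at this
  calc volume (Ioo (0:ℝ) 1 • A)
      ≤ ∑ k ∈ Finset.range (N+1), volume (closedBall (((k:ℝ)*d) • w₀) (2*d)) :=
        (measure_mono cover).trans (measure_biUnion_finset_le _ _)
    _ = (N+1 : ℕ) * (ENNReal.ofReal ((2*d) ^ 3) * volume (ball (0:E3) 1)) := by
        rw [Finset.sum_congr rfl (fun k _ => by
          rw [Measure.addHaar_closedBall _ _ (by positivity : (0:ℝ) ≤ 2*d), finrank_E3]),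
          Finset.sum_const, Finset.card_range, nsmul_eq_mul]
    _ ≤ ENNReal.ofReal (24 * d ^ 2) * volume (ball (0:E3) 1) := by
        rw [← mul_assoc]
        gcongr
        calc ((N+1:ℕ) : ℝ≥0∞) * ENNReal.ofReal ((2*d)^3)
            = ENNReal.ofReal (((N:ℝ)+1) * (2*d)^3) := by
              rw [ENNReal.ofReal_mul (by positivity), ← ENNReal.ofReal_natCast (N+1)]
              push_cast
              ring_nf
        _ ≤ ENNReal.ofReal (24 * d^2) := by
              apply ENNReal.ofReal_le_ofReal
              nlinarith [mul_le_mul_of_nonneg_right h1' (show (0:ℝ) ≤ 8*d^2 by positivity)]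


def cSph : ℝ≥0∞ := 72 * volume (Metric.ball (0:E3) 1)

lemma cSph_ne_zero : cSph ≠ 0 := by
  simp only [cSph, ne_eq, mul_eq_zero]
  push_neg
  exact ⟨by norm_num, (measure_ball_pos _ _ one_pos).ne'⟩

lemma cSph_ne_top : cSph ≠ ⊤ := by
  simp only [cSph, ne_eq]
  exact ENNReal.mul_ne_top (by norm_num) measure_ball_lt_top.ne

lemma cone_vol_zero {A : Set E3} (hA : A ⊆ sphere (0:E3) 1) (hdiam : EMetric.diam A = 0) :
    volume (Ioo (0:ℝ) 1 • A) = 0 := by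
  rcases A.eq_empty_or_nonempty with rfl | ⟨w₀, hw₀⟩
  · simp
  have hw0 : w₀ ≠ 0 := by
    have := mem_sphere_zero_iff_norm.1 (hA hw₀)
    intro h; rw [h] at this; simp at this
  have hsub : Ioo (0:ℝ) 1 • A ⊆ (Submodule.span ℝ {w₀} : Submodule ℝ E3) := by
    rintro x ⟨r, hr, w, hw, rfl⟩
    have : w = w₀ := by
      have := EMetric.edist_le_diam_of_mem hw hw₀
      rw [show Metric.ediam A = 0 from hdiam, le_zero_iff, edist_eq_zero] at this
      exact this
    rw [this]
    exact Submodule.smul_mem _ _ (Submodule.mem_span_singleton_self _)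
  refine measure_mono_null hsub (Measure.addHaar_submodule _ _ ?_)
  intro h
  have h1 : Module.finrank ℝ (Submodule.span ℝ ({w₀} : Set E3)) = 1 :=
    finrank_span_singleton hw0
  rw [h] at h1
  rw [finrank_top] at h1
  rw [finrank_E3] at h1
  norm_num at h1

lemma toSphere_le_hausdorff (A : Set (sphere (0:E3) 1)) :
    (volume : Measure E3).toSphere A ≤ cSph * μH[2] ((↑) '' A : Set E3) := by
  have key : cSph⁻¹ • (volume : Measure E3).toSphere ≤ μH[2] := by
    apply MeasureTheory.Measure.le_hausdorffMeasure 2 _ 1 one_pos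
    intro s hs
    have hsub : (↑) '' closure s ⊆ sphere (0:E3) 1 := Subtype.coe_image_subset _ _
    have hdiam_eq : EMetric.diam ((↑) '' closure s : Set E3) = EMetric.diam s := by
      show Metric.ediam _ = Metric.ediam _
      rw [isometry_subtype_coe.ediam_image, Metric.ediam_closure]
    have hclm : MeasurableSet (closure s) := isClosed_closure.measurableSet
    have h1 : (volume : Measure E3).toSphere s
        ≤ 3 * volume (Ioo (0:ℝ) 1 • ((↑) '' closure s : Set E3)) := by
      calc (volume : Measure E3).toSphere s
          ≤ (volume : Measure E3).toSphere (closure s) := measure_mono subset_closure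
        _ = (Module.finrank ℝ E3 : ℝ≥0∞) * volume (Ioo (0:ℝ) 1 • ((↑) '' closure s : Set E3)) :=
            Measure.toSphere_apply' _ hclm
        _ = 3 * volume (Ioo (0:ℝ) 1 • ((↑) '' closure s : Set E3)) := by
            rw [finrank_E3]; norm_num
    rcases eq_or_ne (EMetric.diam s) 0 with h0 | h0
    · have hz : volume (Ioo (0:ℝ) 1 • ((↑) '' closure s : Set E3)) = 0 :=
        cone_vol_zero hsub (by rw [hdiam_eq, h0])
      have : (cSph⁻¹ • (volume : Measure E3).toSphere) s = 0 := by
        rw [Measure.smul_apply, smul_eq_mul]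
        have : (volume : Measure E3).toSphere s = 0 := le_antisymm (by rw [hz, mul_zero] at h1; exact h1) zero_le
        rw [this, mul_zero]
      rw [this]
      exact zero_le
    · have hdne : EMetric.diam s ≠ ⊤ := (hs.trans_lt (by norm_num)).ne
      set d := (EMetric.diam s).toReal with hd
      have hd0 : 0 < d := ENNReal.toReal_pos h0 hdne
      have hd1 : d ≤ 1 := by
        have := ENNReal.toReal_mono (by norm_num) hs
        simp at this; exact this
      have hdiam' : EMetric.diam ((↑) '' closure s : Set E3) ≤ ENNReal.ofReal d := by
        rw [hdiam_eq, ENNReal.ofReal_toReal hdne]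
      have h2 := cone_vol_le hsub hd0 hd1 hdiam'
      calc (cSph⁻¹ • (volume : Measure E3).toSphere) s
          = cSph⁻¹ * (volume : Measure E3).toSphere s := rfl
        _ ≤ cSph⁻¹ * (3 * (ENNReal.ofReal (24 * d ^ 2) * volume (ball (0:E3) 1))) := by
            gcongr
            exact h1.trans (by gcongr)
        _ = cSph⁻¹ * (cSph * ENNReal.ofReal (d ^ 2)) := by
            congr 1
            rw [cSph, ENNReal.ofReal_mul (by norm_num : (0:ℝ) ≤ 24), ENNReal.ofReal_ofNat]
            ring
        _ = ENNReal.ofReal (d ^ 2) := by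
            rw [← mul_assoc, ENNReal.inv_mul_cancel cSph_ne_zero cSph_ne_top, one_mul]
        _ = EMetric.diam s ^ (2:ℝ) := by
            rw [ENNReal.ofReal_pow hd0.le, hd, ENNReal.ofReal_toReal hdne,
              ← ENNReal.rpow_natCast (EMetric.diam s) 2]
            norm_num
  have := Measure.le_iff'.1 key A
  calc (volume : Measure E3).toSphere A
      = cSph * (cSph⁻¹ * (volume : Measure E3).toSphere A) := by
        rw [← mul_assoc, ENNReal.mul_inv_cancel cSph_ne_zero cSph_ne_top, one_mul]
    _ ≤ cSph * μH[2] A := by gcongr; exact this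
    _ = cSph * μH[2] ((↑) '' A : Set E3) := by
        rw [isometry_subtype_coe.hausdorffMeasure_image (Or.inl (by norm_num))]


section
variable (j : E3 → ℝ) (hjc : Continuous j) (hj0 : ∀ v, 0 ≤ j v)
  (hjh : ∀ (c : ℝ) (v : E3), 0 ≤ c → j (c • v) = c * j v)
  (C₀ : ℝ) (hC₀ : 0 < C₀)
  (hmeas : ∀ κ : ℝ, 0 < κ →
    μH[2] {v : E3 | ‖v‖ = 1 ∧ 0 < j v ∧ j v < κ} ≤ ENNReal.ofReal (C₀ * κ))

include hjc hj0 hjh hC₀ hmeas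

lemma sphere_graze {β : ℝ} (hβ : 0 < β) :
    (volume : Measure E3).toSphere {w : sphere (0:E3) 1 | 0 < j ↑w ∧ j ↑w < β}
      ≤ cSph * ENNReal.ofReal (C₀ * β) := by
  refine (toSphere_le_hausdorff _).trans ?_
  gcongr
  have himg : ((↑) '' {w : sphere (0:E3) 1 | 0 < j ↑w ∧ j ↑w < β} : Set E3)
      = {v : E3 | ‖v‖ = 1 ∧ 0 < j v ∧ j v < β} := by
    ext v
    constructor
    · rintro ⟨w, hw, rfl⟩
      exact ⟨mem_sphere_zero_iff_norm.1 w.2, hw⟩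
    · rintro ⟨hv, hv2⟩
      exact ⟨⟨v, mem_sphere_zero_iff_norm.2 hv⟩, hv2, rfl⟩
  rw [himg]
  exact hmeas β hβ

lemma Jbound {κ : ℝ} (hκ : 0 < κ) :
    ∫⁻ v in {v : E3 | 0 < j v ∧ j v < κ}, ENNReal.ofReal (((1 + ‖v‖^2)⁻¹)^2) ≤
      20 * cSph * ENNReal.ofReal (C₀ * κ) := by
  classical
  have hVm : MeasurableSet {v : E3 | 0 < j v ∧ j v < κ} :=
    ((isOpen_lt continuous_const hjc).inter (isOpen_lt hjc continuous_const)).measurableSet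
  set G : (sphere (0:E3) 1 × Ioi (0:ℝ)) → ℝ≥0∞ := fun p =>
    if 0 < j ↑p.1 ∧ (p.2 : ℝ) * j ↑p.1 < κ then ENNReal.ofReal (((1 + (p.2:ℝ)^2)⁻¹)^2)
    else 0 with hG
  have hrcont : Continuous fun p : sphere (0:E3) 1 × Ioi (0:ℝ) => (p.2 : ℝ) :=
    continuous_subtype_val.comp continuous_snd
  have hGmeas : Measurable G := by
    have hj1 : Continuous fun p : sphere (0:E3) 1 × Ioi (0:ℝ) => j ↑p.1 :=
      (hjc.comp continuous_subtype_val).comp continuous_fst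
    have hset : MeasurableSet
        {p : sphere (0:E3) 1 × Ioi (0:ℝ) | 0 < j ↑p.1 ∧ (p.2:ℝ) * j ↑p.1 < κ} :=
      ((isOpen_lt continuous_const hj1).inter
        (isOpen_lt (hrcont.mul hj1) continuous_const)).measurableSet
    have hval : Measurable fun p : sphere (0:E3) 1 × Ioi (0:ℝ) =>
        ENNReal.ofReal (((1 + (p.2:ℝ)^2)⁻¹)^2) :=
      (((measurable_const.add ((hrcont.measurable).pow_const 2)).inv).pow_const 2).ennreal_ofReal
    have : G = Set.indicator {p : sphere (0:E3) 1 × Ioi (0:ℝ) | 0 < j ↑p.1 ∧ (p.2:ℝ) * j ↑p.1 < κ}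
        (fun p => ENNReal.ofReal (((1 + (p.2:ℝ)^2)⁻¹)^2)) := by
      ext p; rw [Set.indicator_apply]; rfl
    rw [this]
    exact hval.indicator hset
  -- polar coordinates
  have key1 : ∫⁻ v in {v : E3 | 0 < j v ∧ j v < κ}, ENNReal.ofReal (((1 + ‖v‖^2)⁻¹)^2)
      = ∫⁻ p, G p ∂((volume : Measure E3).toSphere.prod (Measure.volumeIoiPow 2)) := by
    set f : E3 → ℝ≥0∞ := fun v =>
      Set.indicator {v : E3 | 0 < j v ∧ j v < κ}
        (fun v => ENNReal.ofReal (((1 + ‖v‖^2)⁻¹)^2)) v with hf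
    have hd2 : Module.finrank ℝ E3 - 1 = 2 := by rw [finrank_E3]
    have mp := (volume : Measure E3).measurePreserving_homeomorphUnitSphereProd
    rw [hd2] at mp
    have hfG : ∀ x : ({0}ᶜ : Set E3), f ↑x = G (homeomorphUnitSphereProd E3 x) := by
      intro x
      have hx0 : (x : E3) ≠ 0 := x.2
      have hxn : (0:ℝ) < ‖(x:E3)‖ := norm_pos_iff.2 hx0
      have hjx : j ↑x = ‖(x:E3)‖ * j (‖(x:E3)‖⁻¹ • (x:E3)) := by
        conv_lhs => rw [← smul_inv_smul₀ hxn.ne' (x : E3)]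
        rw [hjh _ _ hxn.le]
      rw [hf, hG]
      simp only [Set.indicator_apply, mem_setOf_eq,
        homeomorphUnitSphereProd_apply_fst_coe, homeomorphUnitSphereProd_apply_snd_coe]
      refine if_congr ?_ rfl rfl
      rw [hjx]
      exact and_congr_left' (mul_pos_iff_of_pos_left hxn)
    calc ∫⁻ v in {v : E3 | 0 < j v ∧ j v < κ}, ENNReal.ofReal (((1 + ‖v‖^2)⁻¹)^2)
        = ∫⁻ v, f v := (lintegral_indicator hVm _).symm
      _ = ∫⁻ v in ({0}ᶜ : Set E3), f v := by rw [restrict_compl_singleton]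
      _ = ∫⁻ x : ({0}ᶜ : Set E3), f ↑x ∂(Measure.comap Subtype.val volume) :=
          (lintegral_subtype_comap (measurableSet_singleton 0).compl _).symm
      _ = ∫⁻ x : ({0}ᶜ : Set E3), G (homeomorphUnitSphereProd E3 x)
            ∂(Measure.comap Subtype.val volume) := by
          exact lintegral_congr hfG
      _ = ∫⁻ p, G p ∂((volume : Measure E3).toSphere.prod (Measure.volumeIoiPow 2)) :=
          mp.lintegral_comp hGmeas
  rw [key1, lintegral_prod G hGmeas.aemeasurable]
  set ν := (volume : Measure E3).toSphere with hν
  set I : sphere (0:E3) 1 → ℝ≥0∞ := fun w => ∫⁻ r, G (w, r) ∂(Measure.volumeIoiPow 2) with hI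
  -- inner integral representation
  have hIrep : ∀ w : sphere (0:E3) 1, I w = ∫⁻ s in Ioi (0:ℝ),
      (fun s : ℝ => ENNReal.ofReal (s^2) *
        (if 0 < j ↑w ∧ s * j ↑w < κ then ENNReal.ofReal (((1 + s^2)⁻¹)^2) else 0)) s := by
    intro w
    simp only [hI, Measure.volumeIoiPow]
    rw [lintegral_withDensity_eq_lintegral_mul _
        ((measurable_subtype_coe.pow_const 2).ennreal_ofReal)
        (show Measurable fun r : Ioi (0:ℝ) => G (w, r) from
          hGmeas.comp measurable_prodMk_left)]
    simp only [Pi.mul_apply]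
    exact lintegral_subtype_comap measurableSet_Ioi
      (fun s : ℝ => ENNReal.ofReal (s^2) *
        (if 0 < j ↑w ∧ s * j ↑w < κ then ENNReal.ofReal (((1 + s^2)⁻¹)^2) else 0))
  have hI4 : ∀ w : sphere (0:E3) 1, I w ≤ 4 := by
    intro w
    rw [hIrep w]
    calc ∫⁻ s in Ioi (0:ℝ), (fun s : ℝ => ENNReal.ofReal (s^2) *
          (if 0 < j ↑w ∧ s * j ↑w < κ then ENNReal.ofReal (((1 + s^2)⁻¹)^2) else 0)) s
        ≤ ∫⁻ s in Ioi (0:ℝ), ENNReal.ofReal ((1 + s^2)⁻¹) := by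
          refine setLIntegral_mono (by fun_prop) (fun s _ => ?_)
          split_ifs with h
          · rw [← ENNReal.ofReal_mul (sq_nonneg s)]
            apply ENNReal.ofReal_le_ofReal
            have h1 : (0:ℝ) < 1 + s^2 := by positivity
            have h2 : s^2 * ((1 + s^2)⁻¹)^2 ≤ (1 + s^2) * ((1 + s^2)⁻¹)^2 := by
              gcongr
              linarith
            refine h2.trans (le_of_eq ?_)
            field_simp
          · rw [mul_zero]; exact zero_le
      _ ≤ ∫⁻ s : ℝ, ENNReal.ofReal ((1 + s^2)⁻¹) := setLIntegral_le_lintegral _ _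
      _ = ENNReal.ofReal Real.pi := by
          rw [← ofReal_integral_eq_lintegral_ofReal integrable_inv_one_add_sq
            (Filter.Eventually.of_forall (fun s => by positivity)),
            integral_univ_inv_one_add_sq]
      _ ≤ 4 := by
          calc ENNReal.ofReal Real.pi ≤ ENNReal.ofReal 4 :=
                ENNReal.ofReal_le_ofReal Real.pi_le_four
            _ = 4 := ENNReal.ofReal_ofNat 4
  have hI0 : ∀ w : sphere (0:E3) 1, j ↑w = 0 → I w = 0 := by
    intro w hw
    rw [hIrep w]
    have : ∀ s ∈ Ioi (0:ℝ), (fun s : ℝ => ENNReal.ofReal (s^2) *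
        (if 0 < j ↑w ∧ s * j ↑w < κ then ENNReal.ofReal (((1 + s^2)⁻¹)^2) else 0)) s = 0 := by
      intro s _
      rw [hw]
      simp
    rw [setLIntegral_congr_fun measurableSet_Ioi this]
    simp
  have hIR : ∀ w : sphere (0:E3) 1, 0 < j ↑w → I w ≤ ENNReal.ofReal ((κ / j ↑w)^3) := by
    intro w hw
    set R := κ / j ↑w with hR
    have hRpos : 0 < R := div_pos hκ hw
    rw [hIrep w]
    calc ∫⁻ s in Ioi (0:ℝ), (fun s : ℝ => ENNReal.ofReal (s^2) *
          (if 0 < j ↑w ∧ s * j ↑w < κ then ENNReal.ofReal (((1 + s^2)⁻¹)^2) else 0)) s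
        ≤ ∫⁻ s in Ioi (0:ℝ), (Ioo (0:ℝ) R).indicator (fun _ => ENNReal.ofReal (R^2)) s := by
          refine setLIntegral_mono (measurable_const.indicator measurableSet_Ioo) (fun s hs => ?_)
          split_ifs with h
          · have hsR : s < R := by
              rw [hR, lt_div_iff₀ hw]
              exact h.2
            have hmem : s ∈ Ioo (0:ℝ) R := ⟨hs, hsR⟩
            rw [Set.indicator_of_mem hmem, ← ENNReal.ofReal_mul (sq_nonneg s)]
            apply ENNReal.ofReal_le_ofReal
            have h1 : (0:ℝ) < 1 + s^2 := by positivity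
            have hinv : ((1 + s^2)⁻¹)^2 ≤ 1 := by
              apply pow_le_one₀ (by positivity)
              rw [inv_le_one_iff₀]
              right
              nlinarith [sq_nonneg s]
            have hs2 : s^2 ≤ R^2 := by
              apply pow_le_pow_left₀ (le_of_lt hs) hsR.le
            calc s^2 * ((1 + s^2)⁻¹)^2 ≤ s^2 * 1 :=
                  mul_le_mul_of_nonneg_left hinv (sq_nonneg s)
              _ = s^2 := mul_one _
              _ ≤ R^2 := hs2
          · rw [mul_zero]; exact zero_le
      _ ≤ ENNReal.ofReal (R^3) := by
          rw [lintegral_indicator measurableSet_Ioo,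
            Measure.restrict_restrict measurableSet_Ioo]
          rw [Set.inter_eq_self_of_subset_left Ioo_subset_Ioi_self]
          rw [setLIntegral_const, Real.volume_Ioo, sub_zero,
            ← ENNReal.ofReal_mul (sq_nonneg R)]
          apply ENNReal.ofReal_le_ofReal
          nlinarith [sq_nonneg R, hRpos]
  -- outer integral
  set S0 : Set (sphere (0:E3) 1) := {w | 0 < j ↑w ∧ j ↑w < κ} with hS0
  set En : ℕ → Set (sphere (0:E3) 1) :=
    fun n => {w | κ * 2^n ≤ j ↑w ∧ j ↑w < κ * 2^(n+1)} with hEn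
  have hjcs : Continuous fun w : sphere (0:E3) 1 => j ↑w := hjc.comp continuous_subtype_val
  have hS0m : MeasurableSet S0 :=
    ((isOpen_lt continuous_const hjcs).inter (isOpen_lt hjcs continuous_const)).measurableSet
  have hEnm : ∀ n, MeasurableSet (En n) := fun n =>
    ((isClosed_le continuous_const hjcs).measurableSet).inter
      (isOpen_lt hjcs continuous_const).measurableSet
  have hpt : ∀ w, I w ≤ S0.indicator (fun _ => (4:ℝ≥0∞)) w
      + ∑' n, (En n).indicator (fun _ => (8:ℝ≥0∞)⁻¹^n * 4) w := by
    intro w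
    rcases eq_or_lt_of_le (hj0 ↑w) with h0 | hpos
    · rw [hI0 w h0.symm]; exact zero_le
    rcases lt_or_ge (j ↑w) κ with hlt | hge
    · rw [Set.indicator_of_mem (show w ∈ S0 from ⟨hpos, hlt⟩)]
      exact le_add_right (hI4 w)
    · have hx1 : 1 ≤ j ↑w / κ := (one_le_div hκ).2 hge
      obtain ⟨n, hn1, hn2⟩ : ∃ n : ℕ, (2:ℝ)^n ≤ j ↑w / κ ∧ j ↑w / κ < 2^(n+1) := by
        have hex : ∃ m : ℕ, j ↑w / κ < 2^m := pow_unbounded_of_one_lt _ one_lt_two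
        have hm₀pos : Nat.find hex ≠ 0 := by
          intro h
          have := Nat.find_spec hex
          rw [h] at this
          simp only [pow_zero] at this
          linarith
        obtain ⟨m, hm⟩ := Nat.exists_eq_succ_of_ne_zero hm₀pos
        refine ⟨m, ?_, ?_⟩
        · have := Nat.find_min hex (by omega : m < Nat.find hex)
          linarith [not_lt.1 this]
        · have := Nat.find_spec hex
          rwa [hm] at this
      have hwmem : w ∈ En n := by
        constructor
        · rw [mul_comm]
          exact (le_div_iff₀ hκ).1 hn1
        · rw [mul_comm]
          exact (div_lt_iff₀ hκ).1 hn2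
      have h2n : (0:ℝ) < 2^n := pow_pos two_pos n
      have hkj : κ / j ↑w ≤ ((2:ℝ)^n)⁻¹ := by
        rw [div_le_iff₀ hpos, ← div_eq_inv_mul, le_div_iff₀ h2n]
        have := (le_div_iff₀ hκ).1 hn1
        linarith
      have hterm : I w ≤ (8:ℝ≥0∞)⁻¹^n * 4 := by
        refine (hIR w hpos).trans ?_
        have hc1 : (κ / j ↑w)^3 ≤ (((2:ℝ)^n)⁻¹)^3 :=
          pow_le_pow_left₀ (by positivity) hkj 3
        refine (ENNReal.ofReal_le_ofReal hc1).trans ?_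
        have hc2 : (((2:ℝ)^n)⁻¹)^3 = ((8:ℝ)^n)⁻¹ := by
          have h8 : ((8:ℝ)^n) = ((2:ℝ)^n)^3 := by
            rw [← pow_mul, mul_comm n 3, pow_mul]
            norm_num
          rw [h8, inv_pow]
        rw [hc2, ENNReal.ofReal_inv_of_pos (by positivity),
          ENNReal.ofReal_pow (by norm_num : (0:ℝ) ≤ 8), ENNReal.ofReal_ofNat,
          ENNReal.inv_pow]
        calc ((8:ℝ≥0∞)⁻¹)^n = ((8:ℝ≥0∞)⁻¹)^n * 1 := (mul_one _).symm
          _ ≤ ((8:ℝ≥0∞)⁻¹)^n * 4 := by gcongr <;> norm_num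
      calc I w ≤ (En n).indicator (fun _ => (8:ℝ≥0∞)⁻¹^n * 4) w := by
            rw [Set.indicator_of_mem hwmem]; exact hterm
        _ ≤ ∑' m, (En m).indicator (fun _ => (8:ℝ≥0∞)⁻¹^m * 4) w := ENNReal.le_tsum n
        _ ≤ _ := le_add_left le_rfl
  calc ∫⁻ w, I w ∂ν
      ≤ ∫⁻ w, (S0.indicator (fun _ => (4:ℝ≥0∞)) w
          + ∑' n, (En n).indicator (fun _ => (8:ℝ≥0∞)⁻¹^n * 4) w) ∂ν := lintegral_mono hpt
    _ = 4 * ν S0 + ∑' n, (8:ℝ≥0∞)⁻¹^n * 4 * ν (En n) := by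
        rw [lintegral_add_left (measurable_const.indicator hS0m),
          lintegral_indicator_const hS0m,
          lintegral_tsum (fun n => (measurable_const.indicator (hEnm n)).aemeasurable)]
        congr 1
        exact tsum_congr fun n => lintegral_indicator_const (hEnm n) _
    _ ≤ 4 * (cSph * ENNReal.ofReal (C₀ * κ))
        + ∑' n, (8:ℝ≥0∞)⁻¹^n * 4 * (cSph * ENNReal.ofReal (C₀ * (κ * 2^(n+1)))) := by
        gcongr with n
        · exact sphere_graze j hjc hj0 hjh C₀ hC₀ hmeas hκ
        · refine (measure_mono ?_).trans
            (sphere_graze j hjc hj0 hjh C₀ hC₀ hmeas (β := κ * 2^(n+1)) (by positivity))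
          rintro w ⟨h1, h2⟩
          exact ⟨lt_of_lt_of_le (by positivity) h1, h2⟩
    _ ≤ 20 * cSph * ENNReal.ofReal (C₀ * κ) := by
        have hterm : ∀ n : ℕ, (8:ℝ≥0∞)⁻¹^n * 4 * (cSph * ENNReal.ofReal (C₀ * (κ * 2^(n+1))))
            = (8 * (cSph * ENNReal.ofReal (C₀ * κ))) * ((4:ℝ≥0∞)⁻¹)^n := by
          intro n
          have e1 : C₀ * (κ * 2^(n+1)) = (C₀ * κ) * 2^(n+1) := by ring
          rw [e1, ENNReal.ofReal_mul (by positivity),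
            ENNReal.ofReal_pow (by norm_num : (0:ℝ) ≤ 2), ENNReal.ofReal_ofNat]
          have e2 : ((8:ℝ≥0∞)⁻¹)^n * (2:ℝ≥0∞)^(n+1) = 2 * ((4:ℝ≥0∞)⁻¹)^n := by
            rw [pow_succ, ← mul_assoc, ← mul_pow]
            have : (8:ℝ≥0∞)⁻¹ * 2 = (4:ℝ≥0∞)⁻¹ := by
              rw [show (8:ℝ≥0∞) = 4 * 2 by norm_num,
                ENNReal.mul_inv (Or.inr ENNReal.ofNat_ne_top) (Or.inr (by norm_num)),
                mul_assoc, ENNReal.inv_mul_cancel (by norm_num) ENNReal.ofNat_ne_top, mul_one]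
            rw [this, mul_comm]
          calc ((8:ℝ≥0∞)⁻¹)^n * 4 * (cSph * (ENNReal.ofReal (C₀ * κ) * (2:ℝ≥0∞)^(n+1)))
              = (((8:ℝ≥0∞)⁻¹)^n * (2:ℝ≥0∞)^(n+1)) * (4 * (cSph * ENNReal.ofReal (C₀ * κ))) := by
                ring
            _ = (2 * ((4:ℝ≥0∞)⁻¹)^n) * (4 * (cSph * ENNReal.ofReal (C₀ * κ))) := by rw [e2]
            _ = (8 * (cSph * ENNReal.ofReal (C₀ * κ))) * ((4:ℝ≥0∞)⁻¹)^n := by ring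
        rw [tsum_congr hterm, ENNReal.tsum_mul_left]
        have hsum : ∑' n : ℕ, ((4:ℝ≥0∞)⁻¹)^n ≤ 2 := by
          calc ∑' n : ℕ, ((4:ℝ≥0∞)⁻¹)^n ≤ ∑' n : ℕ, ((2:ℝ≥0∞)⁻¹)^n := by
                gcongr with n
                norm_num
            _ = (1 - 2⁻¹)⁻¹ := ENNReal.tsum_geometric _
            _ = 2 := by rw [ENNReal.one_sub_inv_two, inv_inv]
        calc 4 * (cSph * ENNReal.ofReal (C₀ * κ))
            + 8 * (cSph * ENNReal.ofReal (C₀ * κ)) * ∑' n : ℕ, ((4:ℝ≥0∞)⁻¹)^n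
            ≤ 4 * (cSph * ENNReal.ofReal (C₀ * κ))
              + 8 * (cSph * ENNReal.ofReal (C₀ * κ)) * 2 := by gcongr
          _ = 20 * cSph * ENNReal.ofReal (C₀ * κ) := by ring

end

theorem grazing_set_decay
    (D : Set E3) (hD : IsOpen D) (hconv : Convex ℝ D)
    (x₀ : E3) (hx₀ : x₀ ∈ D)
    (j : E3 → ℝ)
    (hj : ∀ v, j v = sInf {r : ℝ | 0 < r ∧ x₀ + r⁻¹ • v ∈ D})
    (C₀ : ℝ) (hC₀ : 0 < C₀)
    (hmeas : ∀ κ : ℝ, 0 < κ →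
      μH[2] {v : E3 | ‖v‖ = 1 ∧ 0 < j v ∧ j v < κ} ≤ ENNReal.ofReal (C₀ * κ))
    (M t : ℝ) (hM : 0 < M) (ht : 1 ≤ t)
    (μ : E3 → E3 → ℝ) (hμmeas : Measurable (Function.uncurry μ))
    (hμ : ∀ x v : E3, |μ x v| ≤ M / ((jap (x - t • v)) ^ 2 * (jap v) ^ 2)) :
    ∃ C > (0 : ℝ), ∀ κ : ℝ, 0 < κ →
      (∫ p in (D ×ˢ {v : E3 | 0 < j v ∧ j v < κ}), (μ p.1 p.2) ^ 2) ≤ C * M ^ 2 * κ := by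
  -- identify j with a gauge
  have hjg : ∀ v, j v = gauge ((-x₀) +ᵥ D) v := by
    intro v
    rw [hj v, gauge_def']
    congr 1
    ext r
    simp only [mem_setOf_eq, mem_sep_iff, mem_Ioi]
    refine and_congr_right fun hr => ?_
    rw [Set.mem_vadd_set_iff_neg_vadd_mem, neg_neg, vadd_eq_add]
  have hSconv : Convex ℝ ((-x₀) +ᵥ D) := hconv.vadd _
  have hSnhds : ((-x₀) +ᵥ D) ∈ nhds (0 : E3) := by
    refine (hD.vadd (-x₀)).mem_nhds ?_
    exact ⟨x₀, hx₀, by simp⟩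
  have hjc : Continuous j := by
    rw [funext hjg]
    exact continuous_gauge hSconv hSnhds
  have hj0 : ∀ v, 0 ≤ j v := fun v => (hjg v).symm ▸ gauge_nonneg v
  have hjh : ∀ (c : ℝ) (v : E3), 0 ≤ c → j (c • v) = c * j v := by
    intro c v hc
    rw [hjg, hjg, gauge_smul_of_nonneg hc, smul_eq_mul]
  -- integrability of the japanese bracket power
  have hq4 : Integrable (fun y : E3 => ((1:ℝ) + ‖y‖^2) ^ (-(4:ℝ)/2)) := by
    apply integrable_rpow_neg_one_add_norm_sq
    rw [finrank_E3]; norm_num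
  have hqeq : ∀ y : E3, ((1:ℝ) + ‖y‖^2) ^ (-(4:ℝ)/2) = ((1 + ‖y‖^2)⁻¹)^2 := by
    intro y
    have h1 : (0:ℝ) < 1 + ‖y‖^2 := by positivity
    rw [show (-(4:ℝ)/2) = -(2:ℝ) by norm_num, Real.rpow_neg h1.le,
      show ((2:ℝ)) = ((2:ℕ):ℝ) by norm_num, Real.rpow_natCast, inv_pow]
  set Kq : ℝ := ∫ y : E3, ((1:ℝ) + ‖y‖^2) ^ (-(4:ℝ)/2) with hKq
  have hKq0 : 0 ≤ Kq := integral_nonneg fun y => by positivity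
  have hIq : ∫⁻ y : E3, ENNReal.ofReal (((1 + ‖y‖^2)⁻¹)^2) = ENNReal.ofReal Kq := by
    rw [hKq, ofReal_integral_eq_lintegral_ofReal hq4
      (Filter.Eventually.of_forall fun y => by positivity)]
    exact lintegral_congr fun y => by rw [hqeq y]
  set cS : ℝ := cSph.toReal with hcS
  have hcS0 : 0 ≤ cS := ENNReal.toReal_nonneg
  have hcSeq : ENNReal.ofReal cS = cSph := ENNReal.ofReal_toReal cSph_ne_top
  set C : ℝ := 20 * C₀ * cS * Kq + 1 with hC
  have hCpos : 0 < C := by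
    have h1 : 0 ≤ 20 * C₀ := by positivity
    have h2 : 0 ≤ 20 * C₀ * cS * Kq := mul_nonneg (mul_nonneg h1 hcS0) hKq0
    linarith
  refine ⟨C, hCpos, fun κ hκ => ?_⟩
  set V : Set E3 := {v : E3 | 0 < j v ∧ j v < κ} with hV
  have hVm : MeasurableSet V :=
    ((isOpen_lt continuous_const hjc).inter (isOpen_lt hjc continuous_const)).measurableSet
  have hmeas2 : AEStronglyMeasurable (fun p : E3 × E3 => (μ p.1 p.2)^2)
      (volume.restrict (D ×ˢ V)) :=
    ((hμmeas.pow_const 2).aestronglyMeasurable).restrict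
  rw [integral_eq_lintegral_of_nonneg_ae
    (Filter.Eventually.of_forall fun p => sq_nonneg _) hmeas2]
  apply ENNReal.toReal_le_of_le_ofReal
    (mul_nonneg (mul_nonneg hCpos.le (sq_nonneg M)) hκ.le)
  -- continuity facts
  have hqc : Continuous fun y : E3 => ((1 + ‖y‖^2)⁻¹)^2 := by
    apply Continuous.pow
    exact (continuous_const.add ((continuous_norm).pow 2)).inv₀ (fun y => (by positivity : (0:ℝ) < 1 + ‖y‖^2).ne')
  have hcont : Continuous fun p : E3 × E3 =>
      M^2 * ((1 + ‖p.1 - t • p.2‖^2)⁻¹)^2 * ((1 + ‖p.2‖^2)⁻¹)^2 :=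
    (continuous_const.mul (hqc.comp (continuous_fst.sub
      (continuous_snd.const_smul t)))).mul (hqc.comp continuous_snd)
  have hjap : ∀ y : E3, (jap y)^2 = 1 + ‖y‖^2 := fun y =>
    Real.sq_sqrt (by positivity)
  -- pointwise bound
  have hpt : ∀ p : E3 × E3, ENNReal.ofReal ((μ p.1 p.2)^2) ≤
      ENNReal.ofReal (M^2 * ((1 + ‖p.1 - t • p.2‖^2)⁻¹)^2 * ((1 + ‖p.2‖^2)⁻¹)^2) := by
    rintro ⟨x, v⟩
    apply ENNReal.ofReal_le_ofReal
    have hA : (0:ℝ) < 1 + ‖x - t • v‖^2 := by positivity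
    have hB : (0:ℝ) < 1 + ‖v‖^2 := by positivity
    have h1 : (μ x v)^2 ≤ (M / ((jap (x - t • v))^2 * (jap v)^2))^2 := by
      rw [← sq_abs]
      exact pow_le_pow_left₀ (abs_nonneg _) (hμ x v) 2
    refine h1.trans (le_of_eq ?_)
    rw [div_pow, mul_pow, ← pow_mul, ← pow_mul]
    rw [show (jap (x - t•v))^(2*2) = ((jap (x - t•v))^2)^2 by ring,
      show (jap v)^(2*2) = ((jap v)^2)^2 by ring, hjap, hjap]
    field_simp
  calc ∫⁻ p in D ×ˢ V, ENNReal.ofReal ((μ p.1 p.2)^2)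
      ≤ ∫⁻ p in (univ : Set E3) ×ˢ V,
          ENNReal.ofReal (M^2 * ((1 + ‖p.1 - t • p.2‖^2)⁻¹)^2 * ((1 + ‖p.2‖^2)⁻¹)^2) := by
        refine le_trans (lintegral_mono hpt) ?_
        exact lintegral_mono' (Measure.restrict_mono
          (Set.prod_mono (subset_univ D) subset_rfl) le_rfl) le_rfl
    _ = ∫⁻ v in V, ∫⁻ x,
          ENNReal.ofReal (M^2 * ((1 + ‖x - t • v‖^2)⁻¹)^2 * ((1 + ‖v‖^2)⁻¹)^2) ∂volume ∂volume := by
        rw [Measure.volume_eq_prod, ← Measure.prod_restrict, Measure.restrict_univ]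
        exact lintegral_prod_symm _ hcont.measurable.ennreal_ofReal.aemeasurable
    _ = ∫⁻ v in V, (ENNReal.ofReal (M^2) * ENNReal.ofReal Kq)
          * ENNReal.ofReal (((1 + ‖v‖^2)⁻¹)^2) ∂volume := by
        refine setLIntegral_congr_fun hVm (fun v _ => ?_)
        have e1 : ∀ x : E3, ENNReal.ofReal (M^2 * ((1 + ‖x - t • v‖^2)⁻¹)^2 * ((1 + ‖v‖^2)⁻¹)^2)
            = (ENNReal.ofReal (M^2) * ENNReal.ofReal (((1 + ‖v‖^2)⁻¹)^2))
              * ENNReal.ofReal (((1 + ‖x - t • v‖^2)⁻¹)^2) := by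
          intro x
          rw [← ENNReal.ofReal_mul (by positivity), ← ENNReal.ofReal_mul (by positivity)]
          congr 1
          ring
        simp only [e1]
        rw [lintegral_const_mul' _ _
          (ENNReal.mul_ne_top ENNReal.ofReal_ne_top ENNReal.ofReal_ne_top)]
        have e2 : ∫⁻ x : E3, ENNReal.ofReal (((1 + ‖x - t • v‖^2)⁻¹)^2)
            = ENNReal.ofReal Kq := by
          have e3 : ∀ x : E3, x - t • v = -(t • v) + x := fun x => by abel
          simp only [e3]
          rw [lintegral_add_left_eq_self
            (fun y : E3 => ENNReal.ofReal (((1 + ‖y‖^2)⁻¹)^2)) (-(t • v))]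
          exact hIq
        rw [e2]
        ring
    _ = (ENNReal.ofReal (M^2) * ENNReal.ofReal Kq)
          * ∫⁻ v in V, ENNReal.ofReal (((1 + ‖v‖^2)⁻¹)^2) ∂volume :=
        lintegral_const_mul' _ _ (ENNReal.mul_ne_top ENNReal.ofReal_ne_top ENNReal.ofReal_ne_top)
    _ ≤ (ENNReal.ofReal (M^2) * ENNReal.ofReal Kq) * (20 * cSph * ENNReal.ofReal (C₀ * κ)) := by
        gcongr
        exact Jbound j hjc hj0 hjh C₀ hC₀ hmeas hκ
    _ ≤ ENNReal.ofReal (C * M^2 * κ) := by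
        rw [← hcSeq, ← ENNReal.ofReal_ofNat 20,
          ← ENNReal.ofReal_mul (sq_nonneg M),
          ← ENNReal.ofReal_mul (by norm_num : (0:ℝ) ≤ 20),
          ← ENNReal.ofReal_mul (mul_nonneg (by norm_num : (0:ℝ) ≤ 20) hcS0),
          ← ENNReal.ofReal_mul (mul_nonneg (sq_nonneg M) hKq0)]
        apply ENNReal.ofReal_le_ofReal
        have hMκ : 0 ≤ M^2 * κ := mul_nonneg (sq_nonneg M) hκ.le
        have e4 : M^2 * Kq * (20 * cS * (C₀ * κ)) = (20 * C₀ * cS * Kq) * (M^2 * κ) := by ring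
        have e5 : C * M^2 * κ = C * (M^2 * κ) := by ring
        rw [e4, e5]
        exact mul_le_mul_of_nonneg_right (by rw [hC]; linarith) hMκ
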